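/- Let X be a real normed linear space and x ∈ X nonzero. Then y ∈ x^⊥_B if and only if y lies in some associated cone of x, i.e., x^⊥_B equals the union over pairs (f_i, f_j) of extreme support functionals at x of the sets V_{ij} = {y ∈ X : f_i(y) ≥ 0 and f_j(y) ≤ 0}. -/

import Mathlib

/-- Birkhoff-James orthogonality. -/
def BJOrth {X : Type*} [NormedAddCommGroup X] [NormedSpace ℝ X] (x y : X) : Prop :=
  ∀ t : ℝ, ‖x‖ ≤ ‖x + t • y‖

/-- The set of support functionals at `x`. -/
def suppFun {X : Type*} [NormedAddCommGroup X] [NormedSpace ℝ X] (x : X) :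
    Set (X →L[ℝ] ℝ) := {f | ‖f‖ = 1 ∧ f x = ‖x‖}

section aux
variable {X : Type*} [NormedAddCommGroup X] [NormedSpace ℝ X]

/-- James: BJ orthogonality gives a support functional vanishing at `y`. -/
lemma james (x y : X) (hx : x ≠ 0) (h : BJOrth x y) :
    ∃ f : X →L[ℝ] ℝ, f ∈ suppFun x ∧ f y = 0 := by
  by_cases hyx : ∃ c : ℝ, y = c • x
  · obtain ⟨c, rfl⟩ := hyx
    have hc : c = 0 := by
      by_contra hc
      have := h (-c⁻¹)
      rw [smul_smul, show -c⁻¹ * c = -1 by field_simp, neg_one_smul, add_neg_cancel,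
        norm_zero] at this
      exact hx (norm_le_zero_iff.mp this)
    obtain ⟨f, hf1, hf2⟩ := exists_dual_vector ℝ x (norm_ne_zero_iff.mpr hx)
    exact ⟨f, ⟨hf1, by simpa using hf2⟩, by simp [hc]⟩
  · -- linearly independent case
    set σ : (ℝ × ℝ) →ₗ[ℝ] X :=
      (LinearMap.toSpanSingleton ℝ X x).coprod (LinearMap.toSpanSingleton ℝ X y) with hσ
    have hσap : ∀ v : ℝ × ℝ, σ v = v.1 • x + v.2 • y := fun v => rfl
    have hinj : Function.Injective σ := by
      rw [injective_iff_map_eq_zero]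
      rintro ⟨a, b⟩ hab
      rw [hσap] at hab
      by_cases hb : b = 0
      · subst hb
        simp only [zero_smul, add_zero, smul_eq_zero] at hab
        rcases hab with ha | hxx
        · simp [ha]
        · exact absurd hxx hx
      · exfalso
        apply hyx
        refine ⟨-(b⁻¹ * a), ?_⟩
        have : b • y = -(a • x) := by linear_combination (norm := module) hab
        have : y = b⁻¹ • (b • y) := by rw [smul_smul, inv_mul_cancel₀ hb, one_smul]
        rw [this]
        rw [show b • y = -(a • x) by linear_combination (norm := module) hab]
        module
    set P := LinearMap.range σ with hP
    set e : (ℝ × ℝ) ≃ₗ[ℝ] P := LinearEquiv.ofInjective σ hinj with he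
    set f₀ : P →ₗ[ℝ] ℝ := ‖x‖ • ((LinearMap.fst ℝ ℝ ℝ).comp e.symm.toLinearMap) with hf₀
    have key : ∀ a b : ℝ, |a| * ‖x‖ ≤ ‖a • x + b • y‖ := by
      intro a b
      by_cases ha : a = 0
      · simp [ha]
      · have : a • x + b • y = a • (x + (a⁻¹ * b) • y) := by
          rw [smul_add, smul_smul, mul_inv_cancel_left₀ ha]
        rw [this, norm_smul, Real.norm_eq_abs]
        exact mul_le_mul_of_nonneg_left (h (a⁻¹ * b)) (abs_nonneg a)
    have hval : ∀ p : P, f₀ p = ‖x‖ * (e.symm p).1 := fun p => rfl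
    have hbound : ∀ p : P, ‖f₀ p‖ ≤ 1 * ‖(p : X)‖ := by
      intro p
      set v := e.symm p with hv
      have hpv : (p : X) = σ v := by
        have : e v = p := by rw [hv, e.apply_symm_apply]
        rw [← this]
        exact (LinearEquiv.ofInjective_apply σ v).symm ▸ rfl
      rw [hval, one_mul, hpv, hσap, Real.norm_eq_abs, abs_mul, abs_norm, mul_comm]
      exact key v.1 v.2
    set F : P →L[ℝ] ℝ := f₀.mkContinuous 1 hbound with hF
    obtain ⟨g, hge, hgn⟩ := exists_extension_norm_eq P F
    have hsymm : ∀ v : ℝ × ℝ, e.symm ⟨σ v, LinearMap.mem_range_self σ v⟩ = v := by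
      intro v
      have : e v = ⟨σ v, LinearMap.mem_range_self σ v⟩ :=
        Subtype.ext (LinearEquiv.ofInjective_apply σ v)
      rw [← this, e.symm_apply_apply]
    have hxmem : x ∈ P := ⟨(1, 0), by simp [hσap]⟩
    have hymem : y ∈ P := ⟨(0, 1), by simp [hσap]⟩
    have hgx : g x = ‖x‖ := by
      have hx1 : (⟨x, hxmem⟩ : P) = ⟨σ (1, 0), LinearMap.mem_range_self σ (1, 0)⟩ := by
        apply Subtype.ext; simp [hσap]
      have := hge ⟨x, hxmem⟩
      rw [this]
      show f₀ _ = _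
      rw [hval, hx1, hsymm]
      simp
    have hgy : g y = 0 := by
      have hy1 : (⟨y, hymem⟩ : P) = ⟨σ (0, 1), LinearMap.mem_range_self σ (0, 1)⟩ := by
        apply Subtype.ext; simp [hσap]
      have := hge ⟨y, hymem⟩
      rw [this]
      show f₀ _ = _
      rw [hval, hy1, hsymm]
      simp
    have hgle : ‖g‖ ≤ 1 := hgn ▸ f₀.mkContinuous_norm_le zero_le_one hbound
    have hgge : 1 ≤ ‖g‖ := by
      have h1 : ‖x‖ ≤ ‖g‖ * ‖x‖ := by
        calc ‖x‖ = g x := hgx.symm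
        _ ≤ |g x| := le_abs_self _
        _ ≤ ‖g‖ * ‖x‖ := g.le_opNorm x
      have hxp : 0 < ‖x‖ := norm_pos_iff.mpr hx
      nlinarith
    exact ⟨g, ⟨le_antisymm hgle hgge, hgx⟩, hgy⟩

instance (priority := 900) {X : Type*} [NormedAddCommGroup X] [NormedSpace ℝ X] :
    LocallyConvexSpace ℝ (WeakDual ℝ X) :=
  WeakBilin.locallyConvexSpace

open WeakDual Metric in
/-- Krein-Milman step: from a support functional nonnegative at `y`,
get an extreme support functional nonnegative at `y`. -/
lemma exists_extreme_nonneg (x y : X) (hx : x ≠ 0) (f₀ : X →L[ℝ] ℝ)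
    (hf₀ : f₀ ∈ suppFun x) (hy0 : 0 ≤ f₀ y) :
    ∃ f ∈ Set.extremePoints ℝ (suppFun x), 0 ≤ f y := by
  set S : Set (WeakDual ℝ X) := {f : WeakDual ℝ X | toStrongDual f ∈ suppFun x} with hSdef
  have hxp : (0:ℝ) < ‖x‖ := norm_pos_iff.mpr hx
  have hnorm1 : ∀ f : WeakDual ℝ X, f x = ‖x‖ → ‖toStrongDual f‖ ≤ 1 → ‖toStrongDual f‖ = 1 := by
    intro f hfx hfle
    refine le_antisymm hfle ?_
    have h1 : ‖x‖ ≤ ‖toStrongDual f‖ * ‖x‖ := by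
      calc ‖x‖ = toStrongDual f x := hfx.symm
      _ ≤ |toStrongDual f x| := le_abs_self _
      _ ≤ ‖toStrongDual f‖ * ‖x‖ := (toStrongDual f).le_opNorm x
    nlinarith
  have hSeq : S = (toStrongDual ⁻¹' closedBall 0 1) ∩ {f : WeakDual ℝ X | f x = ‖x‖} := by
    ext f
    simp only [hSdef, Set.mem_setOf_eq, Set.mem_inter_iff, Set.mem_preimage,
      mem_closedBall_zero_iff, suppFun]
    constructor
    · rintro ⟨h1, h2⟩; exact ⟨le_of_eq h1, h2⟩
    · rintro ⟨h1, h2⟩; exact ⟨hnorm1 f h2 h1, h2⟩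
  have hS : IsCompact S := by
    rw [hSeq]
    exact (isCompact_closedBall (𝕜 := ℝ) (E := X) 0 1).inter_right
      (isClosed_eq (WeakDual.eval_continuous x) continuous_const)
  set l : WeakDual ℝ X →L[ℝ] ℝ :=
    { toFun := fun f => f y
      map_add' := fun f g => rfl
      map_smul' := fun c f => rfl
      cont := WeakDual.eval_continuous y } with hl
  have hf₀S : (f₀ : WeakDual ℝ X) ∈ S := hf₀
  obtain ⟨m, hmS, hmax⟩ := hS.exists_isMaxOn ⟨f₀, hf₀S⟩ l.continuous.continuousOn
  set t : Set (WeakDual ℝ X) := {f ∈ S | ∀ g ∈ S, l g ≤ l f} with ht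
  have hexp : IsExposed ℝ S t := fun _ => ⟨l, rfl⟩
  have htc : IsCompact t := hexp.isCompact hS
  have htne : t.Nonempty := ⟨m, hmS, hmax⟩
  obtain ⟨e, he⟩ := htc.extremePoints_nonempty htne
  have he' : e ∈ Set.extremePoints ℝ S :=
    (hexp.isExtreme).extremePoints_subset_extremePoints he
  have het : e ∈ t := extremePoints_subset he
  have hey : 0 ≤ e y := le_trans hy0 (het.2 f₀ hf₀S)
  exact ⟨e, he', hey⟩

end aux

theorem stmt_1 {X : Type*} [NormedAddCommGroup X] [NormedSpace ℝ X]
    (x : X) (hx : x ≠ 0) :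
    {y : X | BJOrth x y} =
      ⋃ f ∈ Set.extremePoints ℝ (suppFun x), ⋃ g ∈ Set.extremePoints ℝ (suppFun x),
        {y : X | 0 ≤ f y ∧ g y ≤ 0} := by
  ext y
  simp only [Set.mem_setOf_eq, Set.mem_iUnion, exists_prop]
  constructor
  · intro h
    obtain ⟨f₀, hf₀, hf₀y⟩ := james x y hx h
    obtain ⟨f, hf, hfy⟩ := exists_extreme_nonneg x y hx f₀ hf₀ (le_of_eq hf₀y.symm)
    obtain ⟨g, hg, hgy⟩ := exists_extreme_nonneg x (-y) hx f₀ hf₀ (by simp [hf₀y])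
    exact ⟨f, hf, g, hg, hfy, by simpa using hgy⟩
  · rintro ⟨f, hf, g, hg, hfy, hgy⟩
    have hfs : f ∈ suppFun x := extremePoints_subset hf
    have hgs : g ∈ suppFun x := extremePoints_subset hg
    intro t
    rcases le_or_gt 0 t with htt | htt
    · calc ‖x‖ = f x + t * f y - t * f y := by rw [hfs.2]; ring
      _ ≤ f x + t * f y := by nlinarith
      _ = f (x + t • y) := by simp [mul_comm]
      _ ≤ |f (x + t • y)| := le_abs_self _
      _ ≤ ‖f‖ * ‖x + t • y‖ := f.le_opNorm _
      _ = ‖x + t • y‖ := by rw [hfs.1, one_mul]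
    · calc ‖x‖ = g x + t * g y - t * g y := by rw [hgs.2]; ring
      _ ≤ g x + t * g y := by nlinarith
      _ = g (x + t • y) := by simp [mul_comm]
      _ ≤ |g (x + t • y)| := le_abs_self _
      _ ≤ ‖g‖ * ‖x + t • y‖ := g.le_opNorm _
      _ = ‖x + t • y‖ := by rw [hgs.1, one_mul]
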